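/- arXiv:math/0606163 — 2 statements merged into one kernel-verified Lean document; each statement's English description precedes it below -/
import Mathlib

section
/- For every integer n ≥ 2, as formal power series over ℚ, x² · Q_n(x) · F(n,x) = Q_{n−2}(x) − (1+x)·Q_n(x), where the polynomials Q_{n−2}, Q_n and 1+x are regarded as power series. Consequently F(n,x) is a rational function with denominator Q_n(x) and numerator the polynomial P_n(x) = (Q_{n−2}(x) − (1+x)Q_n(x))/x² of degree n. -/
/-- The `(n+1) × (n+1)` 0-1 matrix whose `(i,j)` entry is `1` iff `i + j ≤ n`,
with integer entries. -/
def B (n : ℕ) : Matrix (Fin (n + 1)) (Fin (n + 1)) ℤ :=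
  Matrix.of fun i j => if (i : ℕ) + (j : ℕ) ≤ n then 1 else 0

/-- `s M` is the sum of all entries of the square matrix `M`. -/
def s {n : ℕ} (M : Matrix (Fin n) (Fin n) ℤ) : ℤ := ∑ i, ∑ j, M i j

/-- `F n` is the power series `∑_{k ≥ 0} s(B(n)^k) xᵏ` over `ℚ`. -/
noncomputable def F (n : ℕ) : PowerSeries ℚ := PowerSeries.mk fun k => (s (B n ^ k) : ℚ)

/-- `Q n = det (I - x • B(n))`, a polynomial with integer coefficients. -/
noncomputable def Q (n : ℕ) : Polynomial ℤ :=
  ((1 : Matrix (Fin (n + 1)) (Fin (n + 1)) (Polynomial ℤ))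
    - (Polynomial.X : Polynomial ℤ) • (B n).map (Polynomial.C ·)).det

/-- The polynomial `Q n`, regarded as a power series over `ℚ`. -/
noncomputable def Qs (n : ℕ) : PowerSeries ℚ :=
  (((Q n).map (Int.castRingHom ℚ) : Polynomial ℚ) : PowerSeries ℚ)

open Matrix

section Aux

variable {R : Type*} [CommRing R]

/-- `1 - x • B(k)`, over an arbitrary commutative ring. -/
noncomputable def Mat (R : Type*) [CommRing R] (x : R) (k : ℕ) :
    Matrix (Fin (k + 1)) (Fin (k + 1)) R :=
  1 - x • (B k).map (Int.castRingHom R)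

lemma Mat_apply (x : R) (k : ℕ) (i j : Fin (k + 1)) :
    Mat R x k i j = (if (i : ℕ) = (j : ℕ) then 1 else 0)
      - x * (if (i : ℕ) + (j : ℕ) ≤ k then 1 else 0) := by
  simp only [Mat, Matrix.sub_apply, Matrix.smul_apply, map_apply, B, of_apply, one_apply, smul_eq_mul]
  by_cases h1 : (i : ℕ) = (j : ℕ) <;> by_cases h2 : (i : ℕ) + (j : ℕ) ≤ k <;>
    simp [h1, h2, Fin.ext_iff]

/-- The key determinant identity, proved by column linearity and two Laplace expansions. -/
lemma main_det (x : R) (m : ℕ) :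
    det (Mat R x m) = det (Mat R x (m + 2))
      + x * det ((Mat R x (m + 2)).updateCol 0 1) := by
  have h1 : det ((Mat R x (m + 2)).updateCol 0 (Pi.single 0 1))
      = det (Mat R x (m + 2)) + x * det ((Mat R x (m + 2)).updateCol 0 1) := by
    have hcol : (Pi.single 0 1 : Fin (m + 3) → R)
        = (fun i => Mat R x (m + 2) i 0) + x • (1 : Fin (m + 3) → R) := by
      funext i
      have hle : (i : ℕ) + 0 ≤ m + 2 := by omega
      simp only [Pi.add_apply, Pi.smul_apply, Pi.one_apply, smul_eq_mul, mul_one, Mat_apply,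
        Fin.val_zero, if_pos hle]
      rcases eq_or_ne i 0 with rfl | h
      · simp
      · have h' : (i : ℕ) ≠ 0 := fun e => h (Fin.ext e)
        rw [Pi.single_eq_of_ne h]
        simp only [h', hle, if_false, if_true]
        ring
    rw [hcol, det_updateCol_add, det_updateCol_smul, updateCol_eq_self]
  rw [← h1]
  rw [det_succ_column_zero ((Mat R x (m + 2)).updateCol 0 (Pi.single 0 1))]
  rw [Finset.sum_eq_single 0]
  · rw [updateCol_self, Pi.single_eq_same]
    simp only [Fin.val_zero, pow_zero, one_mul, mul_one, Fin.succAbove_zero]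
    have hsub : ((Mat R x (m + 2)).updateCol 0 (Pi.single 0 1)).submatrix Fin.succ Fin.succ
        = Matrix.of (fun i j : Fin (m + 2) =>
            (if (i : ℕ) = (j : ℕ) then 1 else 0)
              - x * (if (i : ℕ) + (j : ℕ) ≤ m then 1 else 0)) := by
      ext i j
      rw [submatrix_apply, updateCol_ne (Fin.succ_ne_zero j), Mat_apply]
      simp only [Fin.val_succ, of_apply]
      congr 2
      · simp [Nat.succ_inj]
      · congr 1
        simp only [eq_iff_iff]
        omega
    rw [hsub]
    rw [det_succ_column _ (Fin.last (m + 1))]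
    rw [Finset.sum_eq_single (Fin.last (m + 1))]
    · have hne : ¬((Fin.last (m + 1) : ℕ) + (Fin.last (m + 1) : ℕ) ≤ m) := by
        simp only [Fin.val_last]; omega
      have heq : ((Fin.last (m + 1) : ℕ) = (Fin.last (m + 1) : ℕ)) := rfl
      rw [of_apply, if_pos heq, if_neg hne]
      have hsign : (-1 : R) ^ ((Fin.last (m + 1) : ℕ) + (Fin.last (m + 1) : ℕ)) = 1 :=
        Even.neg_one_pow ⟨(Fin.last (m + 1) : ℕ), by ring⟩
      rw [hsign, Fin.succAbove_last]
      simp only [one_mul, mul_one, mul_zero, sub_zero]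
      congr 1
      ext i j
      rw [submatrix_apply, of_apply, Mat_apply]
      simp [Fin.coe_castSucc]
    · intro b _ hb
      have h4 : ¬((b : ℕ) = (Fin.last (m + 1) : ℕ)) := fun h => hb (Fin.ext h)
      have h5 : ¬((b : ℕ) + (Fin.last (m + 1) : ℕ) ≤ m) := by
        simp only [Fin.val_last]; omega
      rw [of_apply, if_neg h4, if_neg h5]
      ring
    · simp
  · intro b _ hb
    rw [updateCol_self, Pi.single_eq_of_ne hb]
    simp
  · simp

end Aux

/-- The ring homomorphism sending an integer polynomial to a rational power series. -/
noncomputable def psi : Polynomial ℤ →+* PowerSeries ℚ :=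
  Polynomial.coeToPowerSeries.ringHom.comp (Polynomial.mapRingHom (Int.castRingHom ℚ))

lemma psi_X : psi Polynomial.X = PowerSeries.X := by
  simp [psi, Polynomial.coe_X]

lemma psi_C (a : ℤ) : psi (Polynomial.C a) = (Int.castRingHom (PowerSeries ℚ)) a := by
  rw [show psi (Polynomial.C a) = (psi.comp Polynomial.C) a from rfl, eq_intCast, eq_intCast]

lemma psi_coeff (p : Polynomial ℤ) (d : ℕ) :
    PowerSeries.coeff d (psi p) = (p.coeff d : ℚ) := by
  simp [psi, Polynomial.coeToPowerSeries.ringHom_apply, Polynomial.coeff_coe,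
    Polynomial.coeff_map]

lemma psi_Q (k : ℕ) : psi (Q k) = Qs k := by
  simp [Qs, psi, Polynomial.coeToPowerSeries.ringHom_apply]

lemma Qs_eq_det (k : ℕ) :
    Qs k = det (Mat (PowerSeries ℚ) PowerSeries.X k) := by
  rw [← psi_Q, Q, RingHom.map_det, RingHom.mapMatrix_apply]
  congr 1
  refine Matrix.ext fun i j => ?_
  simp only [Matrix.map_apply, Matrix.sub_apply, Matrix.smul_apply, smul_eq_mul, map_sub,
    _root_.map_mul, Mat]
  congr 1
  · rcases eq_or_ne i j with rfl | h
    · simp [Matrix.one_apply]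
    · simp [Matrix.one_apply_ne h]
  · rw [psi_X, psi_C]

/-- The vector of power series `∑ₖ (B(n)^k 𝟙)ᵢ xᵏ`, i.e. `(1 - x B(n))⁻¹ 𝟙`. -/
noncomputable def yv (n : ℕ) : Fin (n + 1) → PowerSeries ℚ :=
  fun i => PowerSeries.mk fun k => (((B n ^ k) *ᵥ 1) i : ℚ)

lemma hMy (n : ℕ) : Mat (PowerSeries ℚ) PowerSeries.X n *ᵥ yv n = 1 := by
  funext i
  rw [Mat, sub_mulVec, one_mulVec, smul_mulVec]
  ext k
  have hBv : ((B n).map (Int.castRingHom (PowerSeries ℚ)) *ᵥ yv n) i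
      = PowerSeries.mk fun k => (((B n ^ (k + 1)) *ᵥ 1) i : ℚ) := by
    ext k'
    rw [mulVec, dotProduct]
    rw [map_sum]
    simp only [Matrix.map_apply]
    have : ∀ j, (PowerSeries.coeff k') ((Int.castRingHom (PowerSeries ℚ)) (B n i j) * yv n j)
        = ((B n i j : ℚ)) * (((B n ^ k') *ᵥ 1) j : ℚ) := by
      intro j
      rw [show ((Int.castRingHom (PowerSeries ℚ)) (B n i j))
          = PowerSeries.C ((B n i j : ℚ)) by simp]
      rw [PowerSeries.coeff_C_mul, yv, PowerSeries.coeff_mk]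
    rw [Finset.sum_congr rfl fun j _ => this j, PowerSeries.coeff_mk]
    rw [pow_succ']
    rw [← mulVec_mulVec]
    rw [mulVec, dotProduct]
    push_cast
    rfl
  simp only [Pi.sub_apply, Pi.smul_apply, smul_eq_mul, map_sub]
  rw [hBv]
  cases k with
  | zero =>
    simp [yv, PowerSeries.coeff_mk, PowerSeries.coeff_zero_X_mul, Pi.one_apply]
  | succ k =>
    rw [PowerSeries.coeff_succ_X_mul]
    simp [yv, PowerSeries.coeff_mk, PowerSeries.coeff_one]

lemma hy0 (n : ℕ) : yv n 0 = 1 + PowerSeries.X * F n := by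
  ext k
  cases k with
  | zero => simp [yv, PowerSeries.coeff_mk, PowerSeries.coeff_zero_X_mul]
  | succ k =>
    rw [map_add, PowerSeries.coeff_succ_X_mul]
    have h1 : (PowerSeries.coeff (k+1)) (1 : PowerSeries ℚ) = 0 := by simp [PowerSeries.coeff_one]
    rw [h1, zero_add]
    simp only [yv, PowerSeries.coeff_mk, F]
    congr 1
    rw [pow_succ', ← mulVec_mulVec, mulVec, dotProduct]
    have hB0 : ∀ j : Fin (n+1), B n 0 j = 1 := by
      intro j
      simp only [B, of_apply, Fin.val_zero, zero_add]
      rw [if_pos (by omega)]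
    simp only [hB0, one_mul]
    rw [s]
    congr 1
    funext j
    rw [mulVec, dotProduct]
    simp

lemma updateCol_det (n : ℕ) :
    det ((Mat (PowerSeries ℚ) PowerSeries.X n).updateCol 0 (1 : Fin (n+1) → PowerSeries ℚ))
      = det (Mat (PowerSeries ℚ) PowerSeries.X n) * (1 + PowerSeries.X * F n) := by
  rw [← Matrix.cramer_apply, Matrix.cramer_eq_adjugate_mulVec, ← hMy n, mulVec_mulVec,
    Matrix.adjugate_mul, smul_mulVec, one_mulVec]
  simp only [Pi.smul_apply, smul_eq_mul]
  rw [hy0]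

/-- Part 1 of the theorem, in terms of `m = n - 2`. -/
lemma part1 (m : ℕ) :
    PowerSeries.X ^ 2 * Qs (m + 2) * F (m + 2)
      = Qs m - (1 + PowerSeries.X) * Qs (m + 2) := by
  have h := main_det (R := PowerSeries ℚ) PowerSeries.X m
  rw [updateCol_det (m + 2), ← Qs_eq_det, ← Qs_eq_det] at h
  rw [h]
  ring

/-- `B(k)` as a product of a triangular matrix and a permutation matrix. -/
lemma B_eq_mul (k : ℕ) :
    B k = (Matrix.of fun i j : Fin (k+1) => if (i : ℕ) ≤ (j : ℕ) then (1 : ℤ) else 0)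
      * (Equiv.Perm.permMatrix ℤ (Fin.revPerm : Equiv.Perm (Fin (k+1)))) := by
  rw [Equiv.Perm.permMatrix, PEquiv.mul_toMatrix_toPEquiv]
  ext i j
  simp only [B, of_apply, submatrix_apply, id_eq]
  congr 1
  have hrev : ((Fin.revPerm.symm j : Fin (k+1)) : ℕ) = k - (j : ℕ) := by
    simp [Fin.revPerm, Fin.val_rev]
  rw [hrev]
  simp only [eq_iff_iff]
  omega

lemma detB_ne_zero (k : ℕ) : (B k).det ≠ 0 := by
  rw [B_eq_mul, det_mul, Matrix.det_permutation]
  have hU : (Matrix.of fun i j : Fin (k+1) =>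
      if (i : ℕ) ≤ (j : ℕ) then (1 : ℤ) else 0).det = 1 := by
    rw [Matrix.det_of_upperTriangular]
    · simp
    · intro i j hij
      simp only [of_apply]
      rw [if_neg (by exact fun h => absurd (Fin.le_def.mpr h) (not_le.mpr hij))]
  rw [hU, one_mul]
  exact Units.ne_zero _

lemma Q_natDegree (k : ℕ) :
    (Q k).natDegree = k + 1 ∧ (Q k).coeff (k + 1) ≠ 0 := by
  have hQ : Q k = Matrix.charpolyRev (B k) := rfl
  have hrev : Q k = (Matrix.charpoly (B k)).reverse := by
    rw [hQ, Matrix.reverse_charpoly]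
  have hdeg : (Matrix.charpoly (B k)).natDegree = k + 1 := by
    rw [Matrix.charpoly_natDegree_eq_dim]
    simp
  have hc0 : (Matrix.charpoly (B k)).coeff 0 ≠ 0 := by
    intro h
    apply detB_ne_zero k
    rw [Matrix.det_eq_sign_charpoly_coeff, h, mul_zero]
  have hcoeff : (Q k).coeff (k + 1) ≠ 0 := by
    rw [hrev, Polynomial.coeff_reverse, hdeg, Polynomial.revAt_le (le_refl _)]
    simpa using hc0
  constructor
  · refine le_antisymm ?_ (Polynomial.le_natDegree_of_ne_zero hcoeff)
    rw [hrev]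
    calc (Matrix.charpoly (B k)).reverse.natDegree
        ≤ (Matrix.charpoly (B k)).natDegree := Polynomial.reverse_natDegree_le _
      _ = k + 1 := hdeg
  · exact hcoeff

theorem F_eq_P_div_Q (n : ℕ) (hn : 2 ≤ n) :
    PowerSeries.X ^ 2 * Qs n * F n = Qs (n - 2) - (1 + PowerSeries.X) * Qs n ∧
    ∃ P : Polynomial ℤ,
      Polynomial.X ^ 2 * P = Q (n - 2) - (1 + Polynomial.X) * Q n ∧
      P.natDegree = n := by
  obtain ⟨m, rfl⟩ : ∃ m, n = m + 2 := ⟨n - 2, by omega⟩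
  have hm : m + 2 - 2 = m := by omega
  rw [hm]
  have h1 := part1 m
  refine ⟨h1, ?_⟩
  -- the ℤ-polynomial `Q m - (1 + X) Q (m+2)` is divisible by `X²`
  have hpsi : psi (Q m - (1 + Polynomial.X) * Q (m + 2))
      = Qs m - (1 + PowerSeries.X) * Qs (m + 2) := by
    rw [map_sub, _root_.map_mul, map_add, _root_.map_one, psi_X, psi_Q, psi_Q]
  have hdvd : (Polynomial.X : Polynomial ℤ) ^ 2 ∣ Q m - (1 + Polynomial.X) * Q (m + 2) := by
    rw [Polynomial.X_pow_dvd_iff]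
    intro d hd
    have hsdvd : (PowerSeries.X : PowerSeries ℚ) ^ 2 ∣
        Qs m - (1 + PowerSeries.X) * Qs (m + 2) := ⟨Qs (m + 2) * F (m + 2), by
      rw [← h1]; ring⟩
    have hz := (PowerSeries.X_pow_dvd_iff.mp hsdvd) d hd
    rw [← hpsi] at hz
    rw [psi_coeff] at hz
    exact_mod_cast hz
  obtain ⟨P, hP⟩ := hdvd
  refine ⟨P, hP.symm, ?_⟩
  -- degree computation
  have hQm := Q_natDegree m
  have hQn := Q_natDegree (m + 2)
  have hQn0 : Q (m + 2) ≠ 0 := fun h => by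
    have := hQn.2; rw [h] at this; simp at this
  have h1X : (1 + Polynomial.X : Polynomial ℤ).natDegree = 1 := by
    compute_degree!
  have h1X0 : (1 + Polynomial.X : Polynomial ℤ) ≠ 0 := fun h => by
    simpa [Polynomial.coeff_one] using congrArg (fun p => Polynomial.coeff p 1) h
  have hmul : ((1 + Polynomial.X) * Q (m + 2)).natDegree = m + 4 := by
    rw [Polynomial.natDegree_mul h1X0 hQn0, h1X, hQn.1]
    ring
  have hsub : (Q m - (1 + Polynomial.X) * Q (m + 2)).natDegree = m + 4 := by
    rw [Polynomial.natDegree_sub_eq_right_of_natDegree_lt]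
    · exact hmul
    · rw [hmul, hQm.1]; omega
  have hsub0 : Q m - (1 + Polynomial.X) * Q (m + 2) ≠ 0 := fun h => by
    rw [h] at hsub; simp at hsub
  have hP0 : P ≠ 0 := fun h => by
    rw [h, mul_zero] at hP
    exact hsub0 hP
  have hdeg2 : (Polynomial.X ^ 2 * P : Polynomial ℤ).natDegree = m + 4 := by
    rw [← hP]; exact hsub
  rw [Polynomial.natDegree_mul (pow_ne_zero 2 Polynomial.X_ne_zero) hP0,
    Polynomial.natDegree_X_pow] at hdeg2
  omega
end

section
/- For every integer n ≥ 4, the polynomials Q_n(x) = det(I − x·B(n)) satisfy the recurrence Q_n(x) + (x² − 2)·Q_{n−2}(x) + Q_{n−4}(x) = 0 in ℤ[x]. -/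
open Polynomial Matrix

private noncomputable def Pm (m t : ℕ) : Matrix (Fin m) (Fin m) (Polynomial ℤ) :=
  Matrix.of fun i j =>
    (if (i : ℕ) = (j : ℕ) then 1 else 0) - (if (i : ℕ) + (j : ℕ) ≤ t then X else 0)

private lemma Q_eq (n : ℕ) : Q n = (Pm (n + 1) n).det := by
  have h : (1 : Matrix (Fin (n+1)) (Fin (n+1)) (Polynomial ℤ))
      - (X : Polynomial ℤ) • (B n).map (C ·) = Pm (n+1) n := by
    ext i j
    simp only [Matrix.sub_apply, Matrix.smul_apply, Matrix.map_apply, B, Matrix.of_apply,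
      Pm, smul_eq_mul, Matrix.one_apply, Fin.ext_iff]
    split_ifs <;> simp
  unfold Q
  rw [h]

private lemma pad (m t : ℕ) (h : t < m) : (Pm (m+1) t).det = (Pm m t).det := by
  rw [Matrix.det_succ_row (Pm (m+1) t) (Fin.last m),
      Finset.sum_eq_single (Fin.last m)]
  · have h1 : Pm (m+1) t (Fin.last m) (Fin.last m) = 1 := by
      simp only [Pm, Matrix.of_apply, Fin.val_last]
      rw [if_neg (show ¬(m + m ≤ t) by omega)]
      simp
    have h2 : (Pm (m+1) t).submatrix Fin.castSucc Fin.castSucc = Pm m t := by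
      ext i j
      simp [Pm]
    rw [h1, Fin.succAbove_last, h2, Fin.val_last, ← two_mul, pow_mul]
    norm_num
  · intro j _ hj
    have hjv : (j : ℕ) ≠ m := by
      intro hh; exact hj (Fin.ext (by simp [hh, Fin.val_last]))
    have h0 : Pm (m+1) t (Fin.last m) j = 0 := by
      simp only [Pm, Matrix.of_apply, Fin.val_last]
      rw [if_neg (by omega), if_neg (by omega)]
      ring
    rw [h0]
    ring
  · simp

private noncomputable def Mm (k : ℕ) : Matrix (Fin (k+5)) (Fin (k+5)) (Polynomial ℤ) :=
  Matrix.of fun i j =>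
    if (i : ℕ) = 0 then
      (if (j : ℕ) = 0 then 2
       else (if (j : ℕ) = 1 then -1 else 0) + (if (j : ℕ) = k + 4 then -X else 0))
    else if (j : ℕ) = 0 then
      (if (i : ℕ) = 1 then -1 else 0) + (if (i : ℕ) = k + 4 then -X else 0)
    else (if (i : ℕ) = (j : ℕ) then 1 else 0) - (if (i : ℕ) + (j : ℕ) ≤ k + 4 then X else 0)

private lemma val_one5 (k : ℕ) : ((1 : Fin (k+5)) : ℕ) = 1 := by
  have h : ((1 : Fin (k+5)) : ℕ) = 1 % (k+5) := rfl
  rw [h]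
  exact Nat.mod_eq_of_lt (by omega)

private lemma detMm_Pm (k : ℕ) : (Mm k).det = (Pm (k+5) (k+4)).det := by
  have h01 : (0 : Fin (k+5)) ≠ 1 := by
    intro h
    have := congrArg Fin.val h
    rw [val_one5] at this
    simp at this
  set A := Pm (k+5) (k+4) with hA
  set A1 := Matrix.updateRow A 0 (A 0 + (-1 : Polynomial ℤ) • A 1) with hA1
  have key : Mm k = Matrix.updateCol A1 0
      (fun i => A1 i 0 + (-1 : Polynomial ℤ) • A1 i 1) := by
    refine Matrix.ext fun i j => ?_
    have hi5 := i.isLt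
    have hj5 := j.isLt
    have hi' : ((i:ℕ) = 0) ↔ (i = 0) := by rw [Fin.ext_iff, Fin.val_zero]
    have hj' : ((j:ℕ) = 0) ↔ (j = 0) := by rw [Fin.ext_iff, Fin.val_zero]
    simp only [hA1, hA, Matrix.updateCol_apply, Matrix.updateRow_apply, Pi.add_apply,
      Pi.smul_apply, smul_eq_mul, Mm, Pm, Matrix.of_apply, Fin.val_zero, val_one5,
      ← hi', ← hj']
    split_ifs
    all_goals try ring
    all_goals try contradiction
    all_goals try (exfalso; omega)
    all_goals simp_all
    all_goals split_ifs
    all_goals try ring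
    all_goals try (exfalso; omega)
  rw [key, Matrix.det_updateCol_add_smul_self A1 h01,
      hA1, Matrix.det_updateRow_add_smul_self A h01]

private lemma succAbove_one_zero (k : ℕ) : (1 : Fin (k+5)).succAbove 0 = 0 := by
  rw [Fin.succAbove_of_castSucc_lt, Fin.castSucc_zero]
  rw [Fin.lt_def, Fin.coe_castSucc, Fin.val_zero, val_one5]
  omega

private lemma succAbove_one_succ (k : ℕ) (b : Fin (k+3)) :
    (1 : Fin (k+5)).succAbove b.succ = b.succ.succ := by
  rw [Fin.succAbove_of_le_castSucc]
  rw [Fin.le_def, Fin.coe_castSucc, Fin.val_succ, val_one5]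
  omega

private noncomputable def D1mat (k : ℕ) : Matrix (Fin (k+4)) (Fin (k+4)) (Polynomial ℤ) :=
  (Mm k).submatrix Fin.succ ((1 : Fin (k+5)).succAbove)

private noncomputable def DLmat (k : ℕ) : Matrix (Fin (k+4)) (Fin (k+4)) (Polynomial ℤ) :=
  (Mm k).submatrix Fin.succ Fin.castSucc

private lemma zero_succAbove_eq (m : ℕ) : (0 : Fin (m+1)).succAbove = Fin.succ :=
  funext fun i => Fin.zero_succAbove i

private lemma detD1 (k : ℕ) : (D1mat k).det = -(Pm (k+1) k).det := by
  rw [Matrix.det_succ_column_zero (D1mat k), Fin.sum_univ_succ,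
      Finset.sum_eq_single (Fin.last (k+2))]
  · have h00 : D1mat k 0 0 = -1 := by
      simp only [D1mat, Matrix.submatrix_apply, succAbove_one_zero, Mm, Matrix.of_apply,
        Fin.val_succ, Fin.val_zero]
      split_ifs
      all_goals try ring
      all_goals try contradiction
      all_goals simp_all
      all_goals omega
      all_goals (exfalso; omega)
    have hsub0 : (D1mat k).submatrix ((0 : Fin (k+4)).succAbove) Fin.succ = Pm (k+3) k := by
      rw [zero_succAbove_eq]
      refine Matrix.ext fun a b => ?_
      simp only [D1mat, Matrix.submatrix_apply, succAbove_one_succ, Mm, Pm, Matrix.of_apply,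
        Fin.val_succ]
      split_ifs
      all_goals try ring
      all_goals try contradiction
      all_goals (exfalso; omega)
    have hls : D1mat k (Fin.last (k+2)).succ 0 = -X := by
      simp only [D1mat, Matrix.submatrix_apply, succAbove_one_zero, Mm, Matrix.of_apply,
        Fin.val_succ, Fin.val_zero, Fin.val_last]
      split_ifs
      all_goals try ring
      all_goals try contradiction
      all_goals (exfalso; omega)
    have hzero : ((D1mat k).submatrix ((Fin.last (k+2)).succ).succAbove Fin.succ).det = 0 := by
      have hsl : (Fin.last (k+2)).succ = Fin.last (k+3) := by
        apply Fin.ext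
        simp [Fin.val_succ, Fin.val_last]
      rw [hsl, Fin.succAbove_last]
      apply Matrix.det_eq_zero_of_column_eq_zero (Fin.last (k+2))
      intro a
      have ha := a.isLt
      simp only [D1mat, Matrix.submatrix_apply, succAbove_one_succ, Mm, Matrix.of_apply,
        Fin.val_succ, Fin.coe_castSucc, Fin.val_last]
      split_ifs
      all_goals try ring
      all_goals try contradiction
      all_goals (exfalso; omega)
    rw [h00, hsub0, hls, hzero, Fin.val_succ, Fin.val_last, Fin.val_zero,
        show (Pm (k+3) k).det = (Pm (k+2) k).det from pad (k+2) k (by omega),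
        show (Pm (k+2) k).det = (Pm (k+1) k).det from pad (k+1) k (by omega)]
    ring
  · intro b _ hb
    have hbv : (b : ℕ) ≠ k + 2 := by
      intro hh; exact hb (Fin.ext (by simp [hh, Fin.val_last]))
    have hb5 := b.isLt
    have h0 : D1mat k b.succ 0 = 0 := by
      simp only [D1mat, Matrix.submatrix_apply, succAbove_one_zero, Mm, Matrix.of_apply,
        Fin.val_succ, Fin.val_zero]
      split_ifs
      all_goals try ring
      all_goals try contradiction
      all_goals (exfalso; omega)
    rw [h0]
    ring
  · simp

private lemma detDL (k : ℕ) :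
    (DLmat k).det = (-1 : Polynomial ℤ)^(k+3) * (-X) * (Pm (k+3) (k+2)).det := by
  rw [Matrix.det_succ_column_zero (DLmat k), Fin.sum_univ_succ,
      Finset.sum_eq_single (Fin.last (k+2))]
  · have h00 : DLmat k 0 0 = -1 := by
      simp only [DLmat, Matrix.submatrix_apply, Fin.castSucc_zero, Mm, Matrix.of_apply,
        Fin.val_succ, Fin.val_zero]
      split_ifs
      all_goals try ring
      all_goals try contradiction
      all_goals simp_all
      all_goals omega
      all_goals (exfalso; omega)
    have hzero : ((DLmat k).submatrix ((0 : Fin (k+4)).succAbove) Fin.succ).det = 0 := by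
      rw [zero_succAbove_eq]
      apply Matrix.det_eq_zero_of_row_eq_zero (Fin.last (k+2))
      intro b
      have hb := b.isLt
      simp only [DLmat, Matrix.submatrix_apply, Mm, Matrix.of_apply,
        Fin.val_succ, Fin.coe_castSucc, Fin.val_last]
      split_ifs
      all_goals try ring
      all_goals try contradiction
      all_goals (exfalso; omega)
    have hls : DLmat k (Fin.last (k+2)).succ 0 = -X := by
      simp only [DLmat, Matrix.submatrix_apply, Fin.castSucc_zero, Mm, Matrix.of_apply,
        Fin.val_succ, Fin.val_zero, Fin.val_last]
      split_ifs
      all_goals try ring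
      all_goals try contradiction
      all_goals (exfalso; omega)
    have hsubL : (DLmat k).submatrix ((Fin.last (k+2)).succ).succAbove Fin.succ
        = Pm (k+3) (k+2) := by
      have hsl : (Fin.last (k+2)).succ = Fin.last (k+3) := by
        apply Fin.ext
        simp [Fin.val_succ, Fin.val_last]
      rw [hsl, Fin.succAbove_last]
      refine Matrix.ext fun a b => ?_
      simp only [DLmat, Matrix.submatrix_apply, Mm, Pm, Matrix.of_apply,
        Fin.val_succ, Fin.coe_castSucc]
      split_ifs
      all_goals try ring
      all_goals try contradiction
      all_goals (exfalso; omega)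
    rw [h00, hzero, hls, hsubL, Fin.val_succ, Fin.val_last, Fin.val_zero]
    ring
  · intro b _ hb
    have hbv : (b : ℕ) ≠ k + 2 := by
      intro hh; exact hb (Fin.ext (by simp [hh, Fin.val_last]))
    have hb5 := b.isLt
    have h0 : DLmat k b.succ 0 = 0 := by
      simp only [DLmat, Matrix.submatrix_apply, Fin.castSucc_zero, Mm, Matrix.of_apply,
        Fin.val_succ, Fin.val_zero]
      split_ifs
      all_goals try ring
      all_goals try contradiction
      all_goals (exfalso; omega)
    rw [h0]
    ring
  · simp

private lemma detMm (k : ℕ) :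
    (Mm k).det = (2 - X^2) * (Pm (k+3) (k+2)).det - (Pm (k+1) k).det := by
  rw [Matrix.det_succ_row_zero (Mm k), Fin.sum_univ_succ, Fin.sum_univ_succ,
      Finset.sum_eq_single (Fin.last (k+2))]
  · have h00 : Mm k 0 0 = 2 := by
      simp only [Mm, Matrix.of_apply, Fin.val_zero]
      split_ifs
      all_goals try ring
      all_goals try contradiction
      all_goals (exfalso; omega)
    have hsub00 : (Mm k).submatrix ((0 : Fin (k+5)).succAbove)
        ((0 : Fin (k+5)).succAbove) = Pm (k+4) (k+2) := by
      rw [zero_succAbove_eq]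
      refine Matrix.ext fun a b => ?_
      simp only [Mm, Pm, Matrix.submatrix_apply, Matrix.of_apply, Fin.val_succ]
      split_ifs
      all_goals try ring
      all_goals try contradiction
      all_goals (exfalso; omega)
    have hone : (0 : Fin (k+4)).succ = (1 : Fin (k+5)) := by
      apply Fin.ext
      rw [Fin.val_succ, Fin.val_zero, val_one5]
    have h01 : Mm k 0 (1 : Fin (k+5)) = -1 := by
      simp only [Mm, Matrix.of_apply, Fin.val_zero, val_one5]
      split_ifs
      all_goals try ring
      all_goals try contradiction
      all_goals (exfalso; omega)
    have hlast : (Fin.last (k+2)).succ.succ = Fin.last (k+4) := by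
      apply Fin.ext
      simp [Fin.val_succ, Fin.val_last]
    have h0l : Mm k 0 (Fin.last (k+4)) = -X := by
      simp only [Mm, Matrix.of_apply, Fin.val_zero, Fin.val_last]
      split_ifs
      all_goals try ring
      all_goals try contradiction
      all_goals (exfalso; omega)
    rw [hone, hlast, Fin.succAbove_last, h00, h01, h0l, val_one5, Fin.val_zero, Fin.val_last]
    have hD1 : (Mm k).submatrix Fin.succ ((1 : Fin (k+5)).succAbove) = D1mat k := rfl
    have hDL : (Mm k).submatrix Fin.succ Fin.castSucc = DLmat k := rfl
    rw [show (0 : Fin (k+5)).succAbove = Fin.succ from zero_succAbove_eq (k+4)] at hsub00 ⊢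
    rw [hD1, hDL, detD1, detDL, hsub00,
        show (Pm (k+4) (k+2)).det = (Pm (k+3) (k+2)).det from pad (k+3) (k+2) (by omega)]
    have hy : (-1 : Polynomial ℤ)^(k+3) * (-1 : Polynomial ℤ)^(k+3) = 1 := by
      rw [← pow_add]
      exact Even.neg_one_pow ⟨k+3, by ring⟩
    have hk4 : (-1 : Polynomial ℤ)^(k+4) = (-1 : Polynomial ℤ)^(k+3) * (-1) := pow_succ _ _
    rw [hk4]
    linear_combination (-(X^2) * (Pm (k+3) (k+2)).det) * hy
  · intro b _ hb
    have hbv : (b : ℕ) ≠ k + 2 := by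
      intro hh; exact hb (Fin.ext (by simp [hh, Fin.val_last]))
    have hb5 := b.isLt
    have h0 : Mm k 0 b.succ.succ = 0 := by
      simp only [Mm, Matrix.of_apply, Fin.val_zero, Fin.val_succ]
      split_ifs
      all_goals try ring
      all_goals try contradiction
      all_goals (exfalso; omega)
    rw [h0]
    ring
  · simp

theorem Q_recurrence (n : ℕ) (hn : 4 ≤ n) :
    Q n + (Polynomial.X ^ 2 - 2) * Q (n - 2) + Q (n - 4) = 0 := by
  obtain ⟨k, rfl⟩ : ∃ k, n = k + 4 := ⟨n - 4, by omega⟩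
  have h2 : k + 4 - 2 = k + 2 := by omega
  have h4 : k + 4 - 4 = k := by omega
  rw [h2, h4, Q_eq, Q_eq, Q_eq]
  have key : (Pm (k + 4 + 1) (k + 4)).det
      = (2 - X ^ 2) * (Pm (k + 2 + 1) (k + 2)).det - (Pm (k + 1) k).det := by
    show (Pm (k+5) (k+4)).det = (2 - X^2) * (Pm (k+3) (k+2)).det - (Pm (k+1) k).det
    rw [← detMm_Pm, detMm]
  rw [key]
  ring
end
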